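/- Let d be a degree and (F_n) an FDD of a d-large Banach space X. Then there exists a blocking (G_n) of (F_n) which is a d-better FDD, i.e., d(X,G_n) → ∞. -/

import Mathlib

/-- A degree: a map `d` assigning to each approximation pair `(X, F)` (a Banach space `X`
together with a finite-dimensional subspace `F`) a nonnegative real, admitting a control
function `K`, non-decreasing in both variables with `lim_{s → 1⁺} K(s, t) = t`, such that
`d(Y, G) ≤ K(‖φ‖, d(X, F))` for every morphism `φ = (S, T) : (X, F) → (Y, G)`
(with the convention `‖φ‖ = 1` when `G = 0`). -/
structure Degree where
  d : ∀ (X : Type) [NormedAddCommGroup X] [NormedSpace ℝ X] [CompleteSpace X],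
    Submodule ℝ X → ℝ
  nonneg : ∀ (X : Type) [NormedAddCommGroup X] [NormedSpace ℝ X] [CompleteSpace X]
    (F : Submodule ℝ X), 0 ≤ d X F
  K : ℝ → ℝ → ℝ
  K_mono : ∀ ⦃s s' t t' : ℝ⦄, 1 ≤ s → s ≤ s' → 0 ≤ t → t ≤ t' → K s t ≤ K s' t'
  K_lim : ∀ t : ℝ, 0 ≤ t →
    Filter.Tendsto (fun s => K s t) (nhdsWithin 1 (Set.Ioi 1)) (nhds t)
  bound : ∀ (X : Type) [NormedAddCommGroup X] [NormedSpace ℝ X] [CompleteSpace X]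
    (Y : Type) [NormedAddCommGroup Y] [NormedSpace ℝ Y] [CompleteSpace Y]
    (F : Submodule ℝ X) (G : Submodule ℝ Y),
    FiniteDimensional ℝ F → FiniteDimensional ℝ G →
    ∀ (S : ↥G →L[ℝ] ↥F) (T : X →L[ℝ] Y),
    (∀ g : ↥G, T ((S g : X)) = (g : Y)) →
    d Y G ≤ K (@ite ℝ (G = ⊥) (Classical.dec _) 1 (‖S‖ * ‖T‖)) (d X F)

/-- A Banach space is `d`-small if the degrees of its finite-dimensional subspaces are
uniformly bounded. -/
def DSmall (D : Degree) (X : Type) [NormedAddCommGroup X] [NormedSpace ℝ X]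
    [CompleteSpace X] : Prop :=
  ∃ M : ℝ, ∀ F : Submodule ℝ X, FiniteDimensional ℝ F → D.d X F ≤ M

/-- A Banach space is `d`-large if it is not `d`-small. -/
def DLarge (D : Degree) (X : Type) [NormedAddCommGroup X] [NormedSpace ℝ X]
    [CompleteSpace X] : Prop :=
  ¬ DSmall D X

/-- A Banach space `X` is asymptotically `d`-small if there is `K` such that for every `n`
there is a finite-codimensional (closed) subspace `X_n ⊆ X` with `d(X, F) ≤ K` for every
`n`-dimensional subspace `F ⊆ X_n`. -/
def AsympDSmall (D : Degree) (X : Type) [NormedAddCommGroup X] [NormedSpace ℝ X]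
    [CompleteSpace X] : Prop :=
  ∃ K : ℝ, ∀ n : ℕ, ∃ Xn : Submodule ℝ X, IsClosed (Xn : Set X) ∧
    FiniteDimensional ℝ (X ⧸ Xn) ∧
    ∀ F : Submodule ℝ X, F ≤ Xn → FiniteDimensional ℝ F →
      Module.finrank ℝ F = n → D.d X F ≤ K


/-- `(F_n)` is an FDD (finite-dimensional decomposition) of a subspace of `X`: each `F_n`
is a nonzero finite-dimensional subspace, and every element of the closed span of the
`F_n`'s has a unique representation as a norm-convergent series `∑ x_n` with
`x_n ∈ F_n`. -/
def IsFDD (X : Type) [NormedAddCommGroup X] [NormedSpace ℝ X]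
    (F : ℕ → Submodule ℝ X) : Prop :=
  (∀ n, F n ≠ ⊥) ∧ (∀ n, FiniteDimensional ℝ (F n)) ∧
  ∀ z ∈ (⨆ n, F n).topologicalClosure,
    ∃! x : ℕ → X, (∀ n, x n ∈ F n) ∧
      Filter.Tendsto (fun N => ∑ n ∈ Finset.range N, x n) Filter.atTop (nhds z)

/-- `(G_m)` is a block-FDD of `(F_n)`: a sequence of nonzero finite-dimensional subspaces
with successive supports relative to `(F_n)`, i.e. `G_m ⊆ ⊕_{n ∈ A_m} F_n` for some
successive finite nonempty sets `A_0 < A_1 < ⋯`. -/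
def IsBlockFDD (X : Type) [NormedAddCommGroup X] [NormedSpace ℝ X]
    (F G : ℕ → Submodule ℝ X) : Prop :=
  (∀ m, G m ≠ ⊥) ∧ (∀ m, FiniteDimensional ℝ (G m)) ∧
  ∃ A : ℕ → Finset ℕ, (∀ m, (A m).Nonempty) ∧
    (∀ m, ∀ i ∈ A m, ∀ j ∈ A (m + 1), i < j) ∧
    ∀ m, G m ≤ ⨆ n ∈ (A m : Set ℕ), F n

/-- The Banach space `Y` isomorphically embeds into the closed subspace `W` of `X`. -/
def EmbedsIn (Y : Type) [NormedAddCommGroup Y] [NormedSpace ℝ Y]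
    {X : Type} [NormedAddCommGroup X] [NormedSpace ℝ X]
    (W : Submodule ℝ X) : Prop :=
  ∃ T : Y →L[ℝ] X, (∀ y, T y ∈ W) ∧ ∃ c > (0 : ℝ), ∀ y, c * ‖y‖ ≤ ‖T y‖

/-- The Banach space `Y` is tight in the sequence `(F_n)`: there is a sequence of nonempty
successive intervals `I_0 < I_1 < ⋯` of integers such that for every infinite `A ⊆ ℕ`,
`Y` does not embed into the closed span `[F_n : n ∉ ⋃_{i ∈ A} I_i]`. -/
def TightIn (Y : Type) [NormedAddCommGroup Y] [NormedSpace ℝ Y]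
    (X : Type) [NormedAddCommGroup X] [NormedSpace ℝ X]
    (F : ℕ → Submodule ℝ X) : Prop :=
  ∃ I : ℕ → Finset ℕ,
    (∀ i, (I i).Nonempty) ∧ (∀ i, ∃ a b, I i = Finset.Icc a b) ∧
    (∀ i, ∀ p ∈ I i, ∀ q ∈ I (i + 1), p < q) ∧
    ∀ A : Set ℕ, A.Infinite →
      ¬ EmbedsIn Y ((⨆ (n : ℕ) (_ : ∀ i ∈ A, n ∉ I i), F n).topologicalClosure)

section Aux

open Filter Submodule ContinuousLinearMap BoundedContinuousFunction Topology

noncomputable section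

variable {X : Type} [NormedAddCommGroup X] [NormedSpace ℝ X] [CompleteSpace X]

lemma closed_convergent :
    IsClosed {g : ℕ →ᵇ X | ∃ l, Tendsto ⇑g atTop (nhds l)} := by
  rw [← isSeqClosed_iff_isClosed]
  intro u g hu hug
  have hg : CauchySeq ⇑g := by
    rw [Metric.cauchySeq_iff]
    intro ε hε
    obtain ⟨k, hk⟩ := (Metric.tendsto_atTop.mp hug (ε/3) (by positivity)).imp
      (fun k h => h k le_rfl)
    obtain ⟨l, hl⟩ := hu k
    obtain ⟨N₂, hN₂⟩ := Metric.cauchySeq_iff.mp hl.cauchySeq (ε/3) (by positivity)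
    refine ⟨N₂, fun m hm n hn => ?_⟩
    have h1 : dist (g m) (u k m) ≤ dist g (u k) := dist_coe_le_dist m
    have h2 : dist (u k n) (g n) ≤ dist (u k) g := dist_coe_le_dist n
    have := hN₂ m hm n hn
    have h4 := dist_triangle4 (g m) (u k m) (u k n) (g n)
    rw [dist_comm g (u k)] at h1
    linarith
  exact cauchySeq_tendsto_of_complete hg

lemma fdd_machinery (F : ℕ → Submodule ℝ X) (hF : IsFDD X F)
    (hspan : (⨆ n, F n).topologicalClosure = ⊤) :
    ∃ (R : ℕ → X →L[ℝ] X) (C : ℝ), 0 ≤ C ∧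
      (∀ n x, ‖R n x‖ ≤ C * ‖x‖) ∧
      (∀ n x, R n x ∈ F n) ∧
      (∀ n, ∀ x ∈ F n, R n x = x) ∧
      (∀ n j, n ≠ j → ∀ x ∈ F j, R n x = 0) := by
  haveI : Nonempty X := ⟨0⟩
  haveI hfd := hF.2.1
  classical
  -- the space of partial-sum sequences
  set Zset : Set (ℕ →ᵇ X) :=
    {g | g 0 = 0 ∧ (∀ n, g (n+1) - g n ∈ F n) ∧ ∃ l, Tendsto ⇑g atTop (nhds l)} with hZset
  have hZsm : ∀ (c : ℝ) g, g ∈ Zset → c • g ∈ Zset := by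
    rintro c g ⟨h0, hd, l, hl⟩
    refine ⟨by simp [h0], fun n => ?_, ⟨c • l, ?_⟩⟩
    · have : (c • g) (n+1) - (c • g) n = c • (g (n+1) - g n) := by
        simp [smul_sub]
      rw [this]; exact smul_mem _ _ (hd n)
    · have : ⇑(c • g) = fun n => c • (g n) := by ext n; simp
      rw [this]; exact hl.const_smul c
  set Z : Submodule ℝ (ℕ →ᵇ X) :=
    { carrier := Zset
      add_mem' := by
        rintro g g' ⟨h0, hd, l, hl⟩ ⟨h0', hd', l', hl'⟩
        refine ⟨by simp [h0, h0'], fun n => ?_, ⟨l + l', ?_⟩⟩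
        · have : (g + g') (n+1) - (g + g') n = (g (n+1) - g n) + (g' (n+1) - g' n) := by
            simp; abel
          rw [this]; exact add_mem (hd n) (hd' n)
        · have : ⇑(g + g') = fun n => g n + g' n := by ext n; simp
          rw [this]; exact hl.add hl'
      zero_mem' := ⟨by simp, fun n => by simp, ⟨0, (tendsto_const_nhds : Tendsto (fun _ : ℕ => (0:X)) atTop (nhds 0))⟩⟩
      smul_mem' := hZsm } with hZ
  have hZc : IsClosed (Z : Set (ℕ →ᵇ X)) := by
    have h1 : IsClosed {g : ℕ →ᵇ X | g 0 = 0} :=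
      isClosed_singleton.preimage (continuous_eval_const (F := ℕ →ᵇ X) (0:ℕ))
    have h2 : IsClosed {g : ℕ →ᵇ X | ∀ n, g (n+1) - g n ∈ F n} := by
      have : {g : ℕ →ᵇ X | ∀ n, g (n+1) - g n ∈ F n}
          = ⋂ n, (fun g : ℕ →ᵇ X => g (n+1) - g n) ⁻¹' (F n) := by
        ext g; simp only [Set.mem_setOf_eq, Set.mem_iInter, Set.mem_preimage, SetLike.mem_coe]
      rw [this]
      exact isClosed_iInter fun n =>
        ((F n).closed_of_finiteDimensional).preimage
          ((continuous_eval_const (F := ℕ →ᵇ X) (n+1)).sub (continuous_eval_const (F := ℕ →ᵇ X) n))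
    have : (Z : Set (ℕ →ᵇ X)) =
        {g : ℕ →ᵇ X | g 0 = 0} ∩ ({g : ℕ →ᵇ X | ∀ n, g (n+1) - g n ∈ F n} ∩
          {g : ℕ →ᵇ X | ∃ l, Tendsto ⇑g atTop (nhds l)}) := by
      ext g; simp only [hZ, hZset]; constructor
      · rintro ⟨a, b, c⟩; exact ⟨a, b, c⟩
      · rintro ⟨a, b, c⟩; exact ⟨a, b, c⟩
    rw [this]
    exact h1.inter (h2.inter closed_convergent)
  haveI hZcomp : CompleteSpace ↥Z := hZc.completeSpace_coe
  -- the limit map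
  have hconv : ∀ g : ↥Z, ∃ l, Tendsto ⇑(g : ℕ →ᵇ X) atTop (nhds l) := fun g => g.2.2.2
  have htend : ∀ g : ↥Z,
      Tendsto ⇑(g : ℕ →ᵇ X) atTop (nhds (limUnder atTop ⇑(g : ℕ →ᵇ X))) := by
    intro g
    obtain ⟨l, hl⟩ := hconv g
    rwa [hl.limUnder_eq]
  set Φlin : ↥Z →ₗ[ℝ] X :=
    { toFun := fun g => limUnder atTop ⇑(g : ℕ →ᵇ X)
      map_add' := by
        intro g g'
        have h : Tendsto ⇑((g + g' : ↥Z) : ℕ →ᵇ X) atTop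
            (nhds (limUnder atTop ⇑(g : ℕ →ᵇ X) + limUnder atTop ⇑(g' : ℕ →ᵇ X))) := by
          have : ⇑((g + g' : ↥Z) : ℕ →ᵇ X) = fun n => (g : ℕ →ᵇ X) n + (g' : ℕ →ᵇ X) n := by
            ext n; simp
          rw [this]
          exact (htend g).add (htend g')
        exact h.limUnder_eq
      map_smul' := by
        intro c g
        have h : Tendsto ⇑((c • g : ↥Z) : ℕ →ᵇ X) atTop
            (nhds (c • limUnder atTop ⇑(g : ℕ →ᵇ X))) := by
          have : ⇑((c • g : ↥Z) : ℕ →ᵇ X) = fun n => c • (g : ℕ →ᵇ X) n := by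
            ext n; simp
          rw [this]
          exact (htend g).const_smul c
        exact h.limUnder_eq } with hΦlin
  have hΦbd : ∀ g : ↥Z, ‖Φlin g‖ ≤ 1 * ‖g‖ := by
    intro g
    rw [one_mul]
    exact le_of_tendsto' (htend g).norm fun n => (g : ℕ →ᵇ X).norm_coe_le_norm n
  set Φ : ↥Z →L[ℝ] X := Φlin.mkContinuous 1 hΦbd with hΦ
  have hΦapply : ∀ g : ↥Z, Φ g = limUnder atTop ⇑(g : ℕ →ᵇ X) := fun g => rfl
  -- injectivity
  have hker : Φ.ker = ⊥ := by
    rw [LinearMap.ker_eq_bot']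
    intro g hg
    have hg0 : Tendsto ⇑(g : ℕ →ᵇ X) atTop (nhds 0) := by
      have h := htend g
      rw [show limUnder atTop ⇑(g : ℕ →ᵇ X) = 0 from hg] at h
      exact h
    obtain ⟨x₀, hx₀, huniq⟩ := hF.2.2 0 ((⨆ n, F n).topologicalClosure.zero_mem)
    have hsum : ∀ N, ∑ n ∈ Finset.range N,
        ((g : ℕ →ᵇ X) (n+1) - (g : ℕ →ᵇ X) n) = (g : ℕ →ᵇ X) N := by
      intro N
      rw [Finset.sum_range_sub]
      rw [g.2.1, sub_zero]
    have h1 : (fun n => (g : ℕ →ᵇ X) (n+1) - (g : ℕ →ᵇ X) n) = x₀ := by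
      refine huniq _ ⟨fun n => g.2.2.1 n, ?_⟩
      exact hg0.congr fun N => (hsum N).symm
    have h2 : (fun _ : ℕ => (0:X)) = x₀ := by
      refine huniq _ ⟨fun n => zero_mem _, ?_⟩
      have : (fun N => ∑ n ∈ Finset.range N, (0:X)) = fun _ => (0:X) := by
        funext N; simp
      rw [this]
      exact tendsto_const_nhds
    have hdiff0 : ∀ n, (g : ℕ →ᵇ X) (n+1) - (g : ℕ →ᵇ X) n = 0 := by
      intro n
      have := congrFun (h1.trans h2.symm) n
      simpa using this
    have hzero : ∀ n, (g : ℕ →ᵇ X) n = 0 := by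
      intro n
      induction n with
      | zero => exact g.2.1
      | succ k ih =>
        have := hdiff0 k
        rw [ih] at this
        simpa using this
    apply Subtype.ext
    apply BoundedContinuousFunction.ext
    intro n
    rw [hzero n]
    rfl
  -- surjectivity
  have hrange : Φ.range = ⊤ := by
    rw [LinearMap.range_eq_top]
    intro z
    obtain ⟨x, ⟨hxF, hxt⟩, -⟩ := hF.2.2 z (by rw [hspan]; trivial)
    obtain ⟨Rb, hRb0, hRb⟩ := cauchySeq_bdd hxt.cauchySeq
    set gx : ℕ →ᵇ X := ⟨ContinuousMap.mk (fun N => ∑ n ∈ Finset.range N, x n)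
      continuous_of_discreteTopology, ⟨Rb, fun a b => (hRb a b).le⟩⟩ with hgx
    have hgZ : gx ∈ Z := by
      refine ⟨show ∑ k ∈ Finset.range 0, x k = 0 by simp, fun n => ?_, ⟨z, hxt⟩⟩
      have h : gx (n+1) - gx n = x n := by
        show (∑ k ∈ Finset.range (n+1), x k) - ∑ k ∈ Finset.range n, x k = x n
        rw [Finset.sum_range_succ]
        abel
      rw [h]; exact hxF n
    exact ⟨⟨gx, hgZ⟩, hxt.limUnder_eq⟩
  set e : ↥Z ≃L[ℝ] X := ContinuousLinearEquiv.ofBijective Φ hker hrange with he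
  set einv : X →L[ℝ] ↥Z := e.symm.toContinuousLinearMap with heinv
  set R : ℕ → X →L[ℝ] X := fun n =>
    (((BoundedContinuousFunction.evalCLM ℝ (n+1) : (ℕ →ᵇ X) →L[ℝ] X)
      - (BoundedContinuousFunction.evalCLM ℝ n : (ℕ →ᵇ X) →L[ℝ] X)).comp Z.subtypeL).comp einv
    with hRdef
  have hRapply : ∀ (n : ℕ) (x : X),
      R n x = ((e.symm x : ℕ →ᵇ X)) (n+1) - ((e.symm x : ℕ →ᵇ X)) n := fun n x => rfl
  -- norm bound
  have hRbound : ∀ (n : ℕ) (x : X), ‖R n x‖ ≤ (2 * ‖einv‖) * ‖x‖ := by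
    intro n x
    rw [hRapply]
    have h1 : ‖((e.symm x : ℕ →ᵇ X)) (n+1) - ((e.symm x : ℕ →ᵇ X)) n‖
        ≤ ‖(e.symm x : ℕ →ᵇ X)‖ + ‖(e.symm x : ℕ →ᵇ X)‖ :=
      (norm_sub_le _ _).trans (add_le_add ((e.symm x : ℕ →ᵇ X).norm_coe_le_norm _)
        ((e.symm x : ℕ →ᵇ X).norm_coe_le_norm _))
    have h2 : ‖(e.symm x : ℕ →ᵇ X)‖ = ‖e.symm x‖ := rfl
    have h3 : ‖e.symm x‖ ≤ ‖einv‖ * ‖x‖ := einv.le_opNorm x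
    rw [h2] at h1
    calc ‖((e.symm x : ℕ →ᵇ X)) (n+1) - ((e.symm x : ℕ →ᵇ X)) n‖
        ≤ ‖e.symm x‖ + ‖e.symm x‖ := h1
      _ ≤ ‖einv‖ * ‖x‖ + ‖einv‖ * ‖x‖ := add_le_add h3 h3
      _ = (2 * ‖einv‖) * ‖x‖ := by ring
  -- membership
  have hRmem : ∀ (n : ℕ) (x : X), R n x ∈ F n := by
    intro n x
    rw [hRapply]
    exact (e.symm x).2.2.1 n
  -- explicit description on the F j
  have hkey : ∀ (j : ℕ) (x : X), x ∈ F j → ∀ n : ℕ,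
      (e.symm x : ℕ →ᵇ X) n = if j < n then x else 0 := by
    intro j x hx
    have hbd : ∀ a b : ℕ, dist (if j < a then x else (0:X)) (if j < b then x else 0)
        ≤ ‖x‖ + ‖x‖ := by
      intro a b
      have hn : ∀ k : ℕ, ‖(if j < k then x else (0:X))‖ ≤ ‖x‖ := by
        intro k; split
        · exact le_rfl
        · simp
      exact (dist_le_norm_add_norm _ _).trans (add_le_add (hn a) (hn b))
    set gx : ℕ →ᵇ X := ⟨ContinuousMap.mk (fun N => if j < N then x else 0)
      continuous_of_discreteTopology, ⟨‖x‖ + ‖x‖, hbd⟩⟩ with hgxdef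
    have hgxapp : ∀ n : ℕ, gx n = if j < n then x else 0 := fun n => rfl
    have hdiffs : ∀ n : ℕ, gx (n+1) - gx n = if n = j then x else 0 := by
      intro n
      rw [hgxapp, hgxapp]
      by_cases h : n = j
      · subst h
        simp
      · by_cases h2 : j < n
        · have h3 : j < n + 1 := by omega
          simp [h2, h3, h]
        · have h3 : ¬ (j < n + 1) := by omega
          simp [h2, h3, h]
    have hgZ : gx ∈ Z := by
      refine ⟨?_, fun n => ?_, ⟨x, ?_⟩⟩
      · rw [hgxapp]; simp
      · rw [hdiffs]
        split
        · rename_i h; rw [h]; exact hx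
        · exact zero_mem _
      · apply tendsto_atTop_of_eventually_const (i₀ := j + 1)
        intro i hi
        rw [hgxapp]
        simp [Nat.lt_of_lt_of_le (Nat.lt_succ_self j) hi]
    have heq : e ⟨gx, hgZ⟩ = x := by
      have h1 : e ⟨gx, hgZ⟩ = Φ ⟨gx, hgZ⟩ := rfl
      rw [h1, hΦapply]
      apply Filter.Tendsto.limUnder_eq
      apply tendsto_atTop_of_eventually_const (i₀ := j + 1)
      intro i hi
      exact (hgxapp i).trans (by simp [Nat.lt_of_lt_of_le (Nat.lt_succ_self j) hi])
    have : e.symm x = ⟨gx, hgZ⟩ := by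
      rw [ContinuousLinearEquiv.symm_apply_eq, heq]
    intro n
    rw [this]
    exact hgxapp n
  have hRid : ∀ n, ∀ x ∈ F n, R n x = x := by
    intro n x hx
    rw [hRapply, hkey n x hx, hkey n x hx]
    simp
  have hRzero : ∀ n j, n ≠ j → ∀ x ∈ F j, R n x = 0 := by
    intro n j hnj x hx
    rw [hRapply, hkey j x hx, hkey j x hx]
    by_cases h2 : j < n
    · have h3 : j < n + 1 := by omega
      simp [h2, h3]
    · have h3 : ¬ (j < n + 1) := by omega
      simp [h2, h3]
  exact ⟨R, 2 * ‖einv‖, by positivity, hRbound, hRmem, hRid, hRzero⟩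



set_option maxHeartbeats 2000000 in
lemma key_lemma (D : Degree) (F : ℕ → Submodule ℝ X) (hF : IsFDD X F)
    (hspan : (⨆ n, F n).topologicalClosure = ⊤) (hX : DLarge D X)
    (m : ℕ) (M : ℝ) :
    ∃ n, m < n ∧ M < D.d X (⨆ i ∈ Finset.Ico m n, F i) := by
  classical
  haveI hfd := hF.2.1
  obtain ⟨R, C, hC0, hRb, hRmem, hRid, hRzero⟩ := fdd_machinery F hF hspan
  -- finite-dimensionality of finite sups
  have finsup : ∀ s : Finset ℕ, FiniteDimensional ℝ ↥(⨆ i ∈ s, F i) := by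
    intro s
    rw [← Finset.sup_eq_iSup]
    exact Submodule.finiteDimensional_finset_sup s F
  -- vanishing helper
  have hvanish : ∀ (T : X →L[ℝ] X) (s : Finset ℕ), (∀ j ∈ s, ∀ x ∈ F j, T x = 0) →
      ∀ x ∈ (⨆ j ∈ s, F j : Submodule ℝ X), T x = 0 := by
    intro T s hT x hx
    refine Submodule.iSup_induction (fun j => ⨆ _ : j ∈ s, F j) (motive := fun v => T v = 0)
      hx ?_ (map_zero T) ?_
    · intro j v hv
      have hv' : v ∈ ⨆ _ : j ∈ s, F j := hv
      by_cases hj : j ∈ s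
      · rw [iSup_pos hj] at hv'
        exact hT j hj v hv'
      · rw [iSup_neg hj, Submodule.mem_bot] at hv'
        rw [hv', map_zero]
    · intro v w hv hw
      rw [map_add, hv, hw, add_zero]
  -- membership helper
  have hmemmap : ∀ (T : X →L[ℝ] X) (s : Finset ℕ) (B' : Submodule ℝ X),
      (∀ j ∈ s, ∀ x ∈ F j, T x ∈ B') →
      ∀ x ∈ (⨆ j ∈ s, F j : Submodule ℝ X), T x ∈ B' := by
    intro T s B' hT x hx
    refine Submodule.iSup_induction (fun j => ⨆ _ : j ∈ s, F j) (motive := fun v => T v ∈ B')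
      hx ?_ (show T 0 ∈ B' by rw [map_zero]; exact zero_mem _) ?_
    · intro j v hv
      have hv' : v ∈ ⨆ _ : j ∈ s, F j := hv
      by_cases hj : j ∈ s
      · rw [iSup_pos hj] at hv'
        exact hT j hj v hv'
      · rw [iSup_neg hj, Submodule.mem_bot] at hv'
        rw [hv', map_zero]
        exact zero_mem _
    · intro v w hv hw
      rw [map_add]
      exact add_mem hv hw
  -- the partial spans
  set P : ℕ → Submodule ℝ X := fun N => ⨆ i ∈ Finset.range N, F i with hPdef
  have hPmono : Monotone P := by
    intro a b hab
    exact biSup_mono fun i hi => Finset.mem_range.mpr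
      (lt_of_lt_of_le (Finset.mem_range.mp hi) hab)
  -- the head
  set H : Submodule ℝ X := ⨆ i ∈ Finset.range m, F i with hHdef
  haveI hHfin : FiniteDimensional ℝ ↥H := finsup (Finset.range m)
  set h : ℕ := Module.finrank ℝ ↥H with hhdef
  set b : Module.Basis (Fin h) ℝ ↥H := Module.finBasis ℝ ↥H with hbdef
  -- head projection
  set π : X →L[ℝ] X := ∑ j ∈ Finset.range m, R j with hπdef
  have hπapply : ∀ z, π z = ∑ j ∈ Finset.range m, R j z := fun z =>
    ContinuousLinearMap.sum_apply _ _ _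
  have hπmem : ∀ z, π z ∈ H := by
    intro z
    rw [hπapply]
    exact sum_mem fun j hj =>
      (le_iSup₂ (f := fun i (_ : i ∈ Finset.range m) => F i) j hj) (hRmem j z)
  have hπF : ∀ j ∈ Finset.range m, ∀ x ∈ F j, π x = x := by
    intro j hj x hx
    rw [hπapply]
    rw [Finset.sum_eq_single j (fun j' _ hj' => hRzero j' j hj' x hx) (fun hj' => absurd hj hj')]
    exact hRid j x hx
  have hπtail : ∀ j, m ≤ j → ∀ x ∈ F j, π x = 0 := by
    intro j hjm x hx
    rw [hπapply]
    exact Finset.sum_eq_zero fun j' hj' =>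
      hRzero j' j (by have := Finset.mem_range.mp hj'; omega) x hx
  have hπH : ∀ x ∈ H, π x = x := by
    intro x hx
    have hz : ∀ x ∈ H, (π - 1 : X →L[ℝ] X) x = 0 := by
      refine hvanish (π - 1) (Finset.range m) ?_
      intro j hj x hx
      rw [ContinuousLinearMap.sub_apply, ContinuousLinearMap.one_apply, hπF j hj x hx, sub_self]
    have := hz x hx
    rw [ContinuousLinearMap.sub_apply, ContinuousLinearMap.one_apply, sub_eq_zero] at this
    exact this
  have hπnorm : ∀ z, ‖π z‖ ≤ (m : ℝ) * C * ‖z‖ := by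
    intro z
    rw [hπapply]
    calc ‖∑ j ∈ Finset.range m, R j z‖ ≤ ∑ j ∈ Finset.range m, ‖R j z‖ := norm_sum_le _ _
      _ ≤ ∑ _j ∈ Finset.range m, C * ‖z‖ := Finset.sum_le_sum fun j _ => hRb j z
      _ = (m : ℝ) * (C * ‖z‖) := by rw [Finset.sum_const, Finset.card_range, nsmul_eq_mul]
      _ = (m : ℝ) * C * ‖z‖ := by ring
  set π' : X →L[ℝ] ↥H := π.codRestrict H hπmem with hπ'def
  set β : Fin h → (X →L[ℝ] ℝ) := fun i =>
    ((b.coord i).toContinuousLinearMap).comp π' with hβdef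
  have hβapply : ∀ i z, β i z = b.repr (π' z) i := by
    intro i z
    simp [hβdef, Module.Basis.coord_apply]
  have hβsum : ∀ z, ∑ i, β i z • ((b i : X)) = π z := by
    intro z
    have h0 : ∑ i, (b.repr (π' z)) i • (b i) = π' z := b.sum_repr (π' z)
    have h1 := congrArg (H.subtype) h0
    rw [map_sum] at h1
    simp only [map_smul] at h1
    have h2 : H.subtype (π' z) = π z := rfl
    rw [h2] at h1
    refine Eq.trans ?_ h1
    exact Finset.sum_congr rfl fun i _ => by rw [hβapply]; rfl
  -- the uniform constants
  set c1 : ℝ := 1 + (m : ℝ) * C + ∑ i, ‖β i‖ with hc1def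
  have hc1pos : 0 ≤ c1 := by
    have h1 : (0:ℝ) ≤ (m : ℝ) * C := mul_nonneg (Nat.cast_nonneg m) hC0
    have h2 : (0:ℝ) ≤ ∑ i, ‖β i‖ := Finset.sum_nonneg fun i _ => norm_nonneg _
    linarith
  set cS : ℝ := c1 * (3/2) with hcSdef
  set cT : ℝ := 2 * (1 + ∑ i, C * (1 + ‖(b i : X)‖)) with hcTdef
  have hcTpos : 0 ≤ cT := by
    have h2 : (0:ℝ) ≤ ∑ i, C * (1 + ‖(b i : X)‖) :=
      Finset.sum_nonneg fun i _ => mul_nonneg hC0 (by positivity)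
    rw [hcTdef]; linarith
  set s₁ : ℝ := max (cS * cT) 1 with hs₁def
  -- a finite-dimensional subspace of large degree
  have hlarge : ∃ E : Submodule ℝ X, FiniteDimensional ℝ ↥E ∧
      D.K s₁ (max M 0) < D.d X E := by
    by_contra hcon
    push_neg at hcon
    exact hX ⟨D.K s₁ (max M 0), fun G hG => hcon G hG⟩
  obtain ⟨E, hEfin, hEd⟩ := hlarge
  -- dual basis of E, extended to X
  set r : ℕ := Module.finrank ℝ ↥E with hrdef
  set eb : Module.Basis (Fin r) ℝ ↥E := Module.finBasis ℝ ↥E with hebdef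
  have hφex : ∀ i : Fin r, ∃ g : X →L[ℝ] ℝ,
      (∀ x : ↥E, g x = (LinearMap.toContinuousLinearMap (eb.coord i)) x) ∧
      ‖g‖ = ‖LinearMap.toContinuousLinearMap (eb.coord i)‖ :=
    fun i => exists_extension_norm_eq E (LinearMap.toContinuousLinearMap (eb.coord i))
  choose φ hφext _hφnorm using hφex
  set δ : ℝ := (1/2) / ((∑ i, ‖φ i‖) + 1) with hδdef
  have hφsum : 0 ≤ ∑ i, ‖φ i‖ := Finset.sum_nonneg fun i _ => norm_nonneg _
  have hδpos : 0 < δ := by rw [hδdef]; positivity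
  have hδs : δ * (∑ i, ‖φ i‖) ≤ 1/2 := by
    rw [hδdef, div_mul_eq_mul_div, div_le_iff₀ (by linarith)]
    nlinarith
  -- approximations in finite spans
  have happrox : ∀ i : Fin r, ∃ (yy : X) (Ny : ℕ), yy ∈ P Ny ∧ ‖(eb i : X) - yy‖ < δ := by
    intro i
    have hm : ((eb i : X)) ∈ closure ((⨆ k, F k : Submodule ℝ X) : Set X) := by
      rw [← Submodule.topologicalClosure_coe, hspan]
      trivial
    rw [Metric.mem_closure_iff] at hm
    obtain ⟨yy, hy, hd⟩ := hm δ hδpos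
    obtain ⟨s, hs⟩ := Submodule.mem_iSup_iff_exists_finset.mp hy
    refine ⟨yy, s.sup id + 1, ?_, by rwa [dist_eq_norm] at hd⟩
    have hle : (⨆ j ∈ s, F j : Submodule ℝ X) ≤ P (s.sup id + 1) := by
      refine biSup_mono fun j hj => ?_
      exact Finset.mem_range.mpr (Nat.lt_succ_of_le (Finset.le_sup (f := id) hj))
    exact hle hs
  choose y Ny hyP hyd using happrox
  set N : ℕ := m + Finset.univ.sup Ny with hNdef
  have hNm : m ≤ N := Nat.le_add_right m _
  have hyPN : ∀ i, y i ∈ P N := by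
    intro i
    refine hPmono ?_ (hyP i)
    have := Finset.le_sup (f := Ny) (Finset.mem_univ i)
    omega
  -- the small perturbation
  set A : X →L[ℝ] X := ∑ i, (φ i).smulRight (y i - (eb i : X)) with hAdef
  have hAnorm : ‖A‖ ≤ 1/2 := by
    refine ContinuousLinearMap.opNorm_le_bound _ (by norm_num) fun z => ?_
    rw [hAdef, ContinuousLinearMap.sum_apply]
    calc ‖∑ i, ((φ i).smulRight (y i - (eb i : X))) z‖
        ≤ ∑ i, ‖((φ i).smulRight (y i - (eb i : X))) z‖ := norm_sum_le _ _
      _ ≤ ∑ i, ‖φ i‖ * ‖z‖ * δ := by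
          refine Finset.sum_le_sum fun i _ => ?_
          rw [ContinuousLinearMap.smulRight_apply, norm_smul]
          have h1 : ‖(φ i) z‖ ≤ ‖φ i‖ * ‖z‖ := (φ i).le_opNorm z
          have h2 : ‖y i - (eb i : X)‖ ≤ δ := by
            rw [norm_sub_rev]
            exact (hyd i).le
          exact mul_le_mul h1 h2 (norm_nonneg _) (by positivity)
      _ = (δ * ∑ i, ‖φ i‖) * ‖z‖ := by rw [← Finset.sum_mul, ← Finset.sum_mul]; ring
      _ ≤ (1/2) * ‖z‖ := mul_le_mul_of_nonneg_right hδs (norm_nonneg z)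
  set U : X →L[ℝ] X := 1 + A with hUdef
  have hAneg : ‖-A‖ < 1 := by rw [norm_neg]; linarith
  set uU : (X →L[ℝ] X)ˣ := Units.oneSub (-A) hAneg with huUdef
  have hUval : (uU : X →L[ℝ] X) = U := by
    rw [huUdef, hUdef]; simp [Units.oneSub, sub_neg_eq_add]
  set V : X →L[ℝ] X := ↑uU⁻¹ with hVdef
  have hVU : ∀ z : X, V (U z) = z := by
    intro z
    have h1 : (↑uU⁻¹ * ↑uU : X →L[ℝ] X) = 1 := Units.inv_mul uU
    have h2 : (↑uU⁻¹ : X →L[ℝ] X) ((↑uU : X →L[ℝ] X) z) = z := by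
      rw [← ContinuousLinearMap.mul_apply, h1, ContinuousLinearMap.one_apply]
    rw [hUval] at h2
    exact h2
  have hVnorm : ‖V‖ ≤ 2 := by
    have h1 : V * U = 1 := by rw [← hUval, hVdef]; exact Units.inv_mul uU
    rw [hUdef, mul_add, mul_one] at h1
    have h3 : V = 1 - V * A := by rw [← h1]; abel
    have h4 : ‖V‖ ≤ ‖(1 : X →L[ℝ] X)‖ + ‖V * A‖ := by
      conv_lhs => rw [h3]
      exact norm_sub_le _ _
    have h5 : ‖V * A‖ ≤ ‖V‖ * ‖A‖ := norm_mul_le _ _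
    have h6 : ‖(1 : X →L[ℝ] X)‖ ≤ 1 := by
      rw [ContinuousLinearMap.one_def]
      exact ContinuousLinearMap.norm_id_le
    nlinarith [norm_nonneg V, norm_nonneg A]
  have hUpt : ∀ z, ‖U z‖ ≤ (3/2) * ‖z‖ := by
    intro z
    rw [hUdef]
    have h0 : (1 + A) z = z + A z := by
      rw [ContinuousLinearMap.add_apply, ContinuousLinearMap.one_apply]
    rw [h0]
    have h1 : ‖A z‖ ≤ (1/2) * ‖z‖ :=
      (A.le_opNorm z).trans (mul_le_mul_of_nonneg_right hAnorm (norm_nonneg z))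
    calc ‖z + A z‖ ≤ ‖z‖ + ‖A z‖ := norm_add_le _ _
      _ ≤ ‖z‖ + (1/2) * ‖z‖ := by linarith
      _ = (3/2) * ‖z‖ := by ring
  have hUE : ∀ x : ↥E, U (x : X) = ∑ i, φ i (x : X) • y i := by
    intro x
    have hrepr : ∑ i, (eb.repr x) i • ((eb i : X)) = (x : X) := by
      have h0 := eb.sum_repr x
      have h1 := congrArg (E.subtype) h0
      rw [map_sum] at h1
      simp only [map_smul] at h1
      exact h1
    have hφx : ∀ i, φ i (x : X) = (eb.repr x) i := by
      intro i
      rw [hφext i x]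
      simp [Module.Basis.coord_apply]
    have hAx : A (x : X) = (∑ i, φ i (x:X) • y i) - ∑ i, φ i (x:X) • ((eb i : X)) := by
      rw [hAdef, ContinuousLinearMap.sum_apply, ← Finset.sum_sub_distrib]
      refine Finset.sum_congr rfl fun i _ => ?_
      rw [ContinuousLinearMap.smulRight_apply, smul_sub]
    have h2 : ∑ i, φ i (x:X) • ((eb i : X)) = (x : X) := by
      refine Eq.trans (Finset.sum_congr rfl fun i _ => by rw [hφx i]) hrepr
    have h0 : U (x:X) = (x:X) + A (x:X) := by
      rw [hUdef, ContinuousLinearMap.add_apply, ContinuousLinearMap.one_apply]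
    rw [h0, hAx, h2]
    abel
  have hUEP : ∀ x : ↥E, U (x : X) ∈ P N := by
    intro x
    rw [hUE]
    exact sum_mem fun i _ => smul_mem _ _ (hyPN i)
  -- normalized tail vectors with biorthogonal functionals
  have huex : ∀ i : Fin h, ∃ u : X, u ∈ F (N+1+(i:ℕ)) ∧ ‖u‖ = 1 := by
    intro i
    obtain ⟨v, hv, hv0⟩ := Submodule.exists_mem_ne_zero_of_ne_bot (hF.1 (N+1+(i:ℕ)))
    refine ⟨‖v‖⁻¹ • v, smul_mem _ _ hv, ?_⟩
    rw [norm_smul, norm_inv, norm_norm]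
    exact inv_mul_cancel₀ (norm_ne_zero_iff.mpr hv0)
  choose u hu hunorm using huex
  have hune : ∀ i, u i ≠ 0 := by
    intro i h0
    have := hunorm i
    rw [h0, norm_zero] at this
    norm_num at this
  have hfex : ∀ i : Fin h, ∃ f : X →L[ℝ] ℝ, ‖f‖ = 1 ∧ f (u i) = 1 := by
    intro i
    obtain ⟨f, h1, h2⟩ := exists_dual_vector ℝ (u i) (norm_ne_zero_iff.mpr (hune i))
    refine ⟨f, h1, ?_⟩
    rw [hunorm i] at h2
    exact_mod_cast h2
  choose f hfnorm hfu using hfex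
  set ustar : Fin h → (X →L[ℝ] ℝ) := fun i => (f i).comp (R (N+1+(i:ℕ))) with hustardef
  have hustar_bd : ∀ i z, ‖ustar i z‖ ≤ C * ‖z‖ := by
    intro i z
    calc ‖(f i) (R (N+1+(i:ℕ)) z)‖ ≤ ‖f i‖ * ‖R (N+1+(i:ℕ)) z‖ := (f i).le_opNorm _
      _ = ‖R (N+1+(i:ℕ)) z‖ := by rw [hfnorm i, one_mul]
      _ ≤ C * ‖z‖ := hRb _ z
  have hRkill : ∀ (k : ℕ) (s : Finset ℕ), (∀ j ∈ s, j ≠ k) →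
      ∀ w ∈ (⨆ j ∈ s, F j : Submodule ℝ X), R k w = 0 := by
    intro k s hs w hw
    exact hvanish (R k) s (fun j hj x hx => hRzero k j (fun hnj => (hs j hj) hnj.symm) x hx) w hw
  have hustar_u : ∀ i j : Fin h, ustar i (u j) = if i = j then 1 else 0 := by
    intro i j
    have happ : ustar i (u j) = (f i) (R (N+1+(i:ℕ)) (u j)) := rfl
    by_cases hij : i = j
    · subst hij
      rw [happ, hRid _ _ (hu i), if_pos rfl]
      exact hfu i
    · have hne : (N+1+(i:ℕ)) ≠ (N+1+(j:ℕ)) := by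
        have : (i : ℕ) ≠ (j : ℕ) := fun hc => hij (Fin.ext hc)
        omega
      rw [happ, hRzero _ _ hne (u j) (hu j), map_zero, if_neg hij]
  -- the block subspace
  set n : ℕ := N + 1 + h with hndef
  set B : Submodule ℝ X := ⨆ j ∈ Finset.Ico m n, F j with hBdef
  haveI hBfin : FiniteDimensional ℝ ↥B := finsup _
  have hFleB : ∀ j, m ≤ j → j < n → F j ≤ B := by
    intro j h1 h2
    exact le_iSup₂ (f := fun i (_ : i ∈ Finset.Ico m n) => F i) j (Finset.mem_Ico.mpr ⟨h1, h2⟩)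
  have huB : ∀ i : Fin h, u i ∈ B := by
    intro i
    refine hFleB (N+1+(i:ℕ)) (by omega) ?_ (hu i)
    have := i.isLt
    omega
  have hQB : ∀ w ∈ P N, w - π w ∈ B := by
    intro w hw
    have hmm := hmemmap (1 - π) (Finset.range N) B ?_ w hw
    · rwa [ContinuousLinearMap.sub_apply, ContinuousLinearMap.one_apply] at hmm
    · intro j hj x hx
      rw [ContinuousLinearMap.sub_apply, ContinuousLinearMap.one_apply]
      by_cases hjm : j < m
      · rw [hπF j (Finset.mem_range.mpr hjm) x hx, sub_self]
        exact zero_mem _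
      · rw [hπtail j (by omega) x hx, sub_zero]
        refine hFleB j (by omega) ?_ hx
        have := Finset.mem_range.mp hj
        omega
  set Sh : X →L[ℝ] X := (1 - π) + ∑ i, (β i).smulRight (u i) with hShdef
  have hShapply : ∀ z, Sh z = (z - π z) + ∑ i, β i z • u i := by
    intro z
    have hsum : (∑ i, (β i).smulRight (u i)) z = ∑ i, β i z • u i := by
      rw [ContinuousLinearMap.sum_apply]
      exact Finset.sum_congr rfl fun i _ => ContinuousLinearMap.smulRight_apply
    rw [hShdef, ContinuousLinearMap.add_apply, ContinuousLinearMap.sub_apply,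
      ContinuousLinearMap.one_apply, hsum]
  have hSEB : ∀ x : ↥E, Sh (U (x : X)) ∈ B := by
    intro x
    rw [hShapply]
    exact add_mem (hQB _ (hUEP x)) (sum_mem fun i _ => smul_mem _ _ (huB i))
  set S : ↥E →L[ℝ] ↥B := (Sh.comp (U.comp E.subtypeL)).codRestrict B (fun x => hSEB x)
    with hSdef
  have hScoe : ∀ x : ↥E, ((S x : X)) = Sh (U (x : X)) := by
    intro x
    rw [hSdef]
    exact ContinuousLinearMap.coe_codRestrict_apply _ _ _ _
  set L : X →L[ℝ] X := ∑ i, (ustar i).smulRight (u i - (b i : X)) with hLdef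
  set T : X →L[ℝ] X := V.comp (1 - L) with hTdef
  -- the left-inverse property
  have hkey1 : ∀ x : ↥E, ∀ i, ustar i (Sh (U (x:X))) = β i (U (x:X)) := by
    intro x i
    rw [hShapply, map_add, map_sub]
    have h1 : ustar i (U (x:X)) = 0 := by
      have hz : R (N+1+(i:ℕ)) (U (x:X)) = 0 := by
        refine hRkill _ (Finset.range N) (fun j hj => ?_) _ (hUEP x)
        have := Finset.mem_range.mp hj
        omega
      show (f i) (R (N+1+(i:ℕ)) (U (x:X))) = 0
      rw [hz, map_zero]
    have h2 : ustar i (π (U (x:X))) = 0 := by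
      have hz : R (N+1+(i:ℕ)) (π (U (x:X))) = 0 := by
        refine hRkill _ (Finset.range m) (fun j hj => ?_) _ (hπmem _)
        have := Finset.mem_range.mp hj
        omega
      show (f i) (R (N+1+(i:ℕ)) (π (U (x:X)))) = 0
      rw [hz, map_zero]
    rw [h1, h2, map_sum]
    have h3 : ∀ j : Fin h, ustar i (β j (U (x:X)) • u j)
        = if i = j then β j (U (x:X)) else 0 := by
      intro j
      rw [map_smul, hustar_u i j]
      by_cases hij : i = j
      · rw [if_pos hij, if_pos hij, smul_eq_mul, mul_one]
      · rw [if_neg hij, if_neg hij, smul_eq_mul, mul_zero]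
    rw [Finset.sum_congr rfl fun j _ => h3 j]
    simp
  have hTS : ∀ x : ↥E, T ((S x : X)) = (x : X) := by
    intro x
    rw [hScoe]
    have hL : L (Sh (U (x:X))) = ∑ i, β i (U (x:X)) • (u i - (b i : X)) := by
      rw [hLdef, ContinuousLinearMap.sum_apply]
      refine Finset.sum_congr rfl fun i _ => ?_
      rw [ContinuousLinearMap.smulRight_apply, hkey1 x i]
    have h1L : (1 - L) (Sh (U (x:X))) = U (x:X) := by
      rw [ContinuousLinearMap.sub_apply, ContinuousLinearMap.one_apply, hL, hShapply]
      have hexp : ∑ i, β i (U (x:X)) • (u i - (b i : X))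
          = (∑ i, β i (U (x:X)) • u i) - ∑ i, β i (U (x:X)) • ((b i : X)) := by
        rw [← Finset.sum_sub_distrib]
        exact Finset.sum_congr rfl fun i _ => smul_sub _ _ _
      rw [hexp, hβsum (U (x:X))]
      abel
    rw [hTdef, ContinuousLinearMap.comp_apply, h1L]
    exact hVU _
  -- norm estimates
  have hShpt : ∀ z, ‖Sh z‖ ≤ c1 * ‖z‖ := by
    intro z
    rw [hShapply, hc1def]
    calc ‖(z - π z) + ∑ i, β i z • u i‖
        ≤ ‖z - π z‖ + ‖∑ i, β i z • u i‖ := norm_add_le _ _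
      _ ≤ (‖z‖ + ‖π z‖) + ∑ i, ‖β i z • u i‖ := add_le_add (norm_sub_le _ _) (norm_sum_le _ _)
      _ ≤ (‖z‖ + (m:ℝ) * C * ‖z‖) + ∑ i, ‖β i‖ * ‖z‖ := by
          refine add_le_add (add_le_add le_rfl (hπnorm z)) (Finset.sum_le_sum fun i _ => ?_)
          rw [norm_smul, hunorm i, mul_one]
          exact (β i).le_opNorm z
      _ = (1 + (m:ℝ)*C + ∑ i, ‖β i‖) * ‖z‖ := by
          rw [← Finset.sum_mul]
          ring
  have hcSpos : 0 ≤ cS := by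
    rw [hcSdef]
    exact mul_nonneg hc1pos (by norm_num)
  have hSnorm : ‖S‖ ≤ cS := by
    refine ContinuousLinearMap.opNorm_le_bound _ hcSpos fun x => ?_
    rw [Submodule.coe_norm, hScoe]
    calc ‖Sh (U (x:X))‖ ≤ c1 * ‖U (x:X)‖ := hShpt _
      _ ≤ c1 * ((3/2) * ‖(x:X)‖) := mul_le_mul_of_nonneg_left (hUpt _) hc1pos
      _ = cS * ‖(x:X)‖ := by rw [hcSdef]; ring
      _ = cS * ‖x‖ := by rw [← Submodule.coe_norm]
  have hTnorm : ‖T‖ ≤ cT := by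
    refine ContinuousLinearMap.opNorm_le_bound _ hcTpos fun z => ?_
    rw [hTdef, ContinuousLinearMap.comp_apply]
    have hLpt : ‖L z‖ ≤ (∑ i, C * (1 + ‖(b i : X)‖)) * ‖z‖ := by
      rw [hLdef, ContinuousLinearMap.sum_apply, Finset.sum_mul]
      refine (norm_sum_le _ _).trans (Finset.sum_le_sum fun i _ => ?_)
      rw [ContinuousLinearMap.smulRight_apply, norm_smul]
      have h1 : ‖u i - (b i : X)‖ ≤ 1 + ‖(b i : X)‖ := by
        have h2 := norm_sub_le (u i) ((b i : X))
        rw [hunorm i] at h2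
        exact h2
      calc ‖ustar i z‖ * ‖u i - (b i : X)‖
          ≤ (C * ‖z‖) * (1 + ‖(b i : X)‖) :=
            mul_le_mul (hustar_bd i z) h1 (norm_nonneg _)
              (mul_nonneg hC0 (norm_nonneg _))
        _ = C * (1 + ‖(b i : X)‖) * ‖z‖ := by ring
    have h1Lpt : ‖(1 - L) z‖ ≤ (1 + ∑ i, C * (1 + ‖(b i : X)‖)) * ‖z‖ := by
      rw [ContinuousLinearMap.sub_apply, ContinuousLinearMap.one_apply]
      calc ‖z - L z‖ ≤ ‖z‖ + ‖L z‖ := norm_sub_le _ _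
        _ ≤ ‖z‖ + (∑ i, C * (1 + ‖(b i : X)‖)) * ‖z‖ := by linarith [hLpt]
        _ = (1 + ∑ i, C * (1 + ‖(b i : X)‖)) * ‖z‖ := by ring
    calc ‖V ((1 - L) z)‖ ≤ ‖V‖ * ‖(1 - L) z‖ := V.le_opNorm _
      _ ≤ 2 * ((1 + ∑ i, C * (1 + ‖(b i : X)‖)) * ‖z‖) :=
          mul_le_mul hVnorm h1Lpt (norm_nonneg _) (by norm_num)
      _ = cT * ‖z‖ := by rw [hcTdef]; ring
  -- apply the degree bound and conclude
  have hbound := D.bound X X B E hBfin hEfin S T hTS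
  refine ⟨n, by omega, ?_⟩
  rw [← hBdef]
  by_contra hcon
  push_neg at hcon
  have hBle : D.d X B ≤ max M 0 := le_trans hcon (le_max_left M 0)
  have ha : D.d X E ≤ D.K s₁ (max M 0) := by
    refine le_trans hbound ?_
    by_cases hEbot : E = ⊥
    · rw [if_pos hEbot]
      exact D.K_mono le_rfl (le_max_right _ _) (D.nonneg X B) hBle
    · rw [if_neg hEbot]
      have hST1 : 1 ≤ ‖S‖ * ‖T‖ := by
        obtain ⟨x0, hx0E, hx00⟩ := Submodule.exists_mem_ne_zero_of_ne_bot hEbot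
        set x : ↥E := ⟨x0, hx0E⟩ with hxdef
        have h1 : ‖x0‖ = ‖T ((S x : X))‖ := by rw [hTS x]
        have h2 : ‖T ((S x : X))‖ ≤ ‖T‖ * ‖(S x : X)‖ := T.le_opNorm _
        have h3 : ‖(S x : X)‖ = ‖S x‖ := (Submodule.coe_norm _).symm
        have h4 : ‖S x‖ ≤ ‖S‖ * ‖x‖ := S.le_opNorm _
        have h5 : ‖x‖ = ‖x0‖ := Submodule.coe_norm x
        have hx0pos : 0 < ‖x0‖ := norm_pos_iff.mpr hx00
        nlinarith [norm_nonneg T, norm_nonneg S]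
      have hSTle : ‖S‖ * ‖T‖ ≤ s₁ := by
        refine le_trans ?_ (le_max_left _ _)
        exact mul_le_mul hSnorm hTnorm (norm_nonneg _) hcSpos
      exact D.K_mono hST1 hSTle (D.nonneg X B) hBle
  linarith [hEd, ha]


end

end Aux

/-- every FDD `(F_n)` of a `d`-large Banach space `X` admits a blocking
`(G_n)`, given by a partition of `ℕ` into successive nonempty intervals
`[k n, k (n+1))`, which is a `d`-better FDD: `d(X, G_n) → ∞`. -/
theorem statement15 (D : Degree)
    (X : Type) [NormedAddCommGroup X] [NormedSpace ℝ X] [CompleteSpace X]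
    (F : ℕ → Submodule ℝ X) (hF : IsFDD X F)
    (hspan : (⨆ n, F n).topologicalClosure = ⊤)
    (hX : DLarge D X) :
    ∃ k : ℕ → ℕ, k 0 = 0 ∧ StrictMono k ∧
      Filter.Tendsto
        (fun n => D.d X (⨆ i ∈ Finset.Ico (k n) (k (n + 1)), F i))
        Filter.atTop Filter.atTop := by
  have key : ∀ (mm : ℕ) (MM : ℝ), ∃ nn, mm < nn ∧
      MM < D.d X (⨆ i ∈ Finset.Ico mm nn, F i) :=
    fun mm MM => key_lemma D F hF hspan hX mm MM
  choose g hg1 hg2 using key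
  set k : ℕ → ℕ := fun n => Nat.rec 0 (fun p kp => g kp (p : ℝ)) n with hk
  have hksucc : ∀ p : ℕ, k (p+1) = g (k p) (p : ℝ) := fun p => rfl
  refine ⟨k, rfl, strictMono_nat_of_lt_succ fun p => ?_, ?_⟩
  · rw [hksucc]
    exact hg1 (k p) (p : ℝ)
  · refine Filter.tendsto_atTop_mono (fun p => ?_) tendsto_natCast_atTop_atTop
    rw [hksucc]
    exact (hg2 (k p) (p : ℝ)).le
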